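/- arXiv:2308.08774 — 3 statements merged into one kernel-verified Lean document; each statement's English description precedes it below -/
import Mathlib

section
/- Let p, p_d, p_2, ε_p, ε_i be real numbers with 0 < p_d. If p ≤ exp(ε_p) · p_d (the ε_p-differential-privacy condition) and p − p_d > exp(ε_i) · (p − p_2) (the ε_i-instance-interpretability condition), then exp(ε_p) > exp(ε_i) · (p − p_2) / p_d + 1. -/
theorem dp_interp_tradeoff (p p_d p_2 ε_p ε_i : ℝ) (hpd : 0 < p_d)
    (hdp : p ≤ Real.exp ε_p * p_d)
    (hint : p - p_d > Real.exp ε_i * (p - p_2)) :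
    Real.exp ε_p > Real.exp ε_i * (p - p_2) / p_d + 1 := by
  rw [gt_iff_lt, ← lt_sub_iff_add_lt, div_lt_iff₀ hpd]
  nlinarith
end

section
/- Let p, p_d, p_2, ε_p, ε_i be real numbers with 0 < p_d and p_2 < p. If p ≤ exp(ε_p) · p_d (the ε_p-differential-privacy condition) and p − p_d > exp(ε_i) · (p − p_2) (the ε_i-instance-interpretability condition), then ε_p > log(1 + exp(ε_i) · (p − p_2) / p_d), and in particular ε_p > 0. -/
theorem dp_lower_bound (p p_d p_2 ε_p ε_i : ℝ) (hpd : 0 < p_d) (hp2 : p_2 < p)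
    (hdp : p ≤ Real.exp ε_p * p_d)
    (hint : p - p_d > Real.exp ε_i * (p - p_2)) :
    ε_p > Real.log (1 + Real.exp ε_i * (p - p_2) / p_d) ∧ ε_p > 0 := by
  have hE : 0 < Real.exp ε_i * (p - p_2) :=
    mul_pos (Real.exp_pos _) (by linarith)
  have h1 : 1 + Real.exp ε_i * (p - p_2) / p_d > 1 := by
    have := div_pos hE hpd; linarith
  have hexp : Real.exp ε_p > 1 + Real.exp ε_i * (p - p_2) / p_d := by
    have key : (1 + Real.exp ε_i * (p - p_2) / p_d) * p_d = p_d + Real.exp ε_i * (p - p_2) := by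
      field_simp
    have h2 : (1 + Real.exp ε_i * (p - p_2) / p_d) * p_d < Real.exp ε_p * p_d := by
      rw [key]; linarith
    exact lt_of_mul_lt_mul_right (by linarith) hpd.le
  have hlog : Real.log (1 + Real.exp ε_i * (p - p_2) / p_d) < ε_p := by
    calc Real.log (1 + Real.exp ε_i * (p - p_2) / p_d) < Real.log (Real.exp ε_p) :=
          Real.log_lt_log (by linarith) hexp
      _ = ε_p := Real.log_exp _
  refine ⟨hlog, lt_of_le_of_lt ?_ hlog⟩
  exact le_of_lt (Real.log_pos h1)
end

section
/- Let p, p_d, p_2, ε_p, ε_i be real numbers with 0 < p_d and p_2 < p. If p ≤ exp(ε_p) · p_d and p − p_d > exp(ε_i) · (p − p_2), then ε_i < log((exp(ε_p) − 1) · p_d / (p − p_2)). -/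
theorem interp_upper_bound (p p_d p_2 ε_p ε_i : ℝ) (hpd : 0 < p_d) (hp2 : p_2 < p)
    (hdp : p ≤ Real.exp ε_p * p_d)
    (hint : p - p_d > Real.exp ε_i * (p - p_2)) :
    ε_i < Real.log ((Real.exp ε_p - 1) * p_d / (p - p_2)) := by
  have h1 : (0:ℝ) < p - p_2 := by linarith
  have h2 : Real.exp ε_i * (p - p_2) < (Real.exp ε_p - 1) * p_d := by nlinarith
  have h3 : Real.exp ε_i < (Real.exp ε_p - 1) * p_d / (p - p_2) :=
    (lt_div_iff₀ h1).mpr h2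
  calc ε_i = Real.log (Real.exp ε_i) := (Real.log_exp ε_i).symm
    _ < _ := Real.log_lt_log (Real.exp_pos _) h3
end
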